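/- For every integer a ≥ 3, z(2^a) = 3 · 2^{a-2}, where z is the Fibonacci entry point. -/

import Mathlib

open Nat


/-- The Fibonacci entry point: least positive `m` with `n ∣ Nat.fib m`. -/
noncomputable def fibEntry (n : ℕ) : ℕ := sInf {m | 0 < m ∧ n ∣ Nat.fib m}

/-- Fibonacci mod 2 has period 3. -/
lemma fib_mod_two (k : ℕ) :
    fib (3 * k) % 2 = 0 ∧ fib (3 * k + 1) % 2 = 1 ∧ fib (3 * k + 2) % 2 = 1 := by
  induction k with
  | zero => decide
  | succ k ih =>
    obtain ⟨h0, h1, h2⟩ := ih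
    have e2 : fib (3*k+2) = fib (3*k) + fib (3*k+1) := fib_add_two
    have e0 : fib (3 * (k+1)) = fib (3*k+1) + fib (3*k+2) := by
      rw [show 3 * (k+1) = (3*k+1) + 2 by ring, fib_add_two]
    have e1 : fib (3 * (k+1) + 1) = fib (3*k+2) + fib (3*(k+1)) := by
      rw [show 3 * (k+1) + 1 = (3*k+2) + 2 by ring, fib_add_two]
      rw [show 3*k+2+1 = 3*(k+1) by ring]
    have e3 : fib (3 * (k+1) + 2) = fib (3*(k+1)) + fib (3*(k+1)+1) := fib_add_two
    omega

/-- Fibonacci mod 4 at multiples of 6. -/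
lemma fib_mod_four (k : ℕ) : fib (6 * k) % 4 = 0 ∧ fib (6 * k + 1) % 4 = 1 := by
  induction k with
  | zero => decide
  | succ k ih =>
    obtain ⟨h0, h1⟩ := ih
    have e0 : fib (6 * (k+1)) = fib (6*k) * 5 + fib (6*k+1) * 8 := by
      have h := fib_add (6*k) 5
      rw [show 6 * (k+1) = 6*k + 5 + 1 by ring, h]
      norm_num [show fib 5 = 5 from rfl, show fib 6 = 8 from rfl]
    have e1 : fib (6 * (k+1) + 1) = fib (6*k) * 8 + fib (6*k+1) * 13 := by
      have h := fib_add (6*k) 6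
      rw [show 6 * (k+1) + 1 = 6*k + 6 + 1 by ring, h]
      norm_num [show fib 6 = 8 from rfl, show fib 7 = 13 from rfl]
    omega

/-- exact 2-adic valuation of fib (3 * 2^k) for k ≥ 1. -/
lemma fib_val (k : ℕ) (hk : 1 ≤ k) :
    ∃ c, c % 2 = 1 ∧ fib (3 * 2 ^ k) = 2 ^ (k + 2) * c := by
  induction k with
  | zero => omega
  | succ k ih =>
    rcases Nat.eq_or_lt_of_le hk with h | h
    · exact ⟨1, rfl, by rw [← h]; decide⟩
    · have hk1 : 1 ≤ k := by omega
      obtain ⟨c, hc, hfib⟩ := ih hk1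
      set N := 3 * 2 ^ k with hN
      obtain ⟨j, hj⟩ : ∃ j, N = 6 * j := by
        obtain ⟨p, hp⟩ : ∃ p, k = p + 1 := ⟨k - 1, by omega⟩
        refine ⟨2 ^ p, ?_⟩
        rw [hN, hp, pow_succ]; ring
      obtain ⟨m0, m1⟩ := fib_mod_four j
      rw [← hj] at m0 m1
      have hge : fib N ≤ 2 * fib (N + 1) := by
        have := fib_le_fib_succ (n := N)
        omega
      have hL : (2 * fib (N+1) - fib N) % 4 = 2 := by omega
      set L := 2 * fib (N+1) - fib N with hLdef
      have hd2 : L = 2 * (L / 2) := by omega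
      have hdodd : (L / 2) % 2 = 1 := by omega
      have e : fib (3 * 2 ^ (k+1)) = fib N * L := by
        rw [show 3 * 2 ^ (k+1) = 2 * N by rw [hN]; ring, fib_two_mul]
      refine ⟨c * (L / 2), by rw [Nat.mul_mod, hc, hdodd], ?_⟩
      rw [e, hfib]
      calc 2 ^ (k+2) * c * L = 2 ^ (k+2) * c * (2 * (L/2)) := by rw [← hd2]
        _ = 2 ^ (k+1+2) * (c * (L/2)) := by ring

lemma fib_odd_of_not_three_dvd (m : ℕ) (h : ¬ 3 ∣ m) : fib m % 2 = 1 := by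
  have h3 := fib_mod_two (m / 3)
  have hm : m = 3 * (m/3) + m % 3 ∧ (m % 3 = 1 ∨ m % 3 = 2) := by omega
  rcases hm.2 with h1 | h1
  · rw [hm.1, h1]; exact h3.2.1
  · rw [hm.1, h1]; exact h3.2.2

lemma fibEntry_spec (n : ℕ) (h : ∃ m, 0 < m ∧ n ∣ fib m) :
    0 < fibEntry n ∧ n ∣ fib (fibEntry n) :=
  Nat.sInf_mem h

lemma fibEntry_dvd (n m : ℕ) (h : ∃ j, 0 < j ∧ n ∣ fib j) (hm : 0 < m) (hd : n ∣ fib m) :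
    fibEntry n ∣ m := by
  obtain ⟨hz, hzd⟩ := fibEntry_spec n h
  set z := fibEntry n with hzdef
  have hg : n ∣ fib (Nat.gcd z m) := by
    rw [fib_gcd]; exact Nat.dvd_gcd hzd hd
  have hgpos : 0 < Nat.gcd z m := Nat.gcd_pos_of_pos_left m hz
  have hle : z ≤ Nat.gcd z m := Nat.sInf_le ⟨hgpos, hg⟩
  have hge : Nat.gcd z m ≤ z := Nat.le_of_dvd hz (Nat.gcd_dvd_left z m)
  have heq : Nat.gcd z m = z := le_antisymm hge hle
  rw [← heq]; exact Nat.gcd_dvd_right z m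

theorem fibEntry_two_pow (a : ℕ) (ha : 3 ≤ a) :
    fibEntry (2 ^ a) = 3 * 2 ^ (a - 2) := by
  obtain ⟨k, hk1, hka⟩ : ∃ k, 1 ≤ k ∧ a = k + 2 := ⟨a - 2, by omega, by omega⟩
  subst hka
  set N := 3 * 2 ^ k with hNdef
  obtain ⟨c, hc, hfib⟩ := fib_val k hk1
  have hdvdN : 2 ^ (k + 2) ∣ fib N := ⟨c, hfib⟩
  have hNpos : 0 < N := by positivity
  have hex : ∃ j, 0 < j ∧ 2 ^ (k + 2) ∣ fib j := ⟨N, hNpos, hdvdN⟩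
  obtain ⟨hzpos, hzdvd⟩ := fibEntry_spec (2 ^ (k + 2)) hex
  set z := fibEntry (2 ^ (k + 2)) with hzdef
  have hzN : z ∣ N := fibEntry_dvd _ _ hex hNpos hdvdN
  -- helper: 2^(k+2) cannot divide fib (3 * 2^j) for j < k
  have key : ∀ j, j < k → ¬ 2 ^ (k + 2) ∣ fib (3 * 2 ^ j) := by
    intro j hj hcon
    rcases Nat.eq_zero_or_pos j with rfl | hj1
    · have : (2:ℕ) ^ (k + 2) ≤ 2 := Nat.le_of_dvd (by decide) (by simpa [show fib 3 = 2 from rfl] using hcon)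
      have : (2:ℕ) ^ 3 ≤ 2 ^ (k+2) := Nat.pow_le_pow_right (by norm_num) (by omega)
      omega
    · obtain ⟨c', hc', hfib'⟩ := fib_val j hj1
      rw [hfib'] at hcon
      have h2 : 2 ^ (j + 2) * 2 ∣ 2 ^ (j + 2) * c' := by
        rw [← pow_succ]
        exact dvd_trans (pow_dvd_pow 2 (by omega)) hcon
      have : 2 ∣ c' := (mul_dvd_mul_iff_left (by positivity : (0:ℕ) < 2 ^ (j+2)).ne').mp h2
      omega
  -- show z = N
  have hz3 : 3 ∣ z := by
    by_contra h3
    have hcop : Nat.Coprime 3 z := (Nat.Prime.coprime_iff_not_dvd (by norm_num)).mpr h3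
    have hz2 : z ∣ 2 ^ k := hcop.symm.dvd_of_dvd_mul_left hzN
    have hodd : fib (2 ^ k) % 2 = 1 := by
      apply fib_odd_of_not_three_dvd
      have : Nat.Coprime 3 (2 ^ k) := Nat.Coprime.pow_right k (by decide)
      exact (Nat.Prime.coprime_iff_not_dvd (by norm_num)).mp this
    have : 2 ^ (k + 2) ∣ fib (2 ^ k) := dvd_trans hzdvd (fib_dvd _ _ hz2)
    have h2 : 2 ∣ fib (2 ^ k) := dvd_trans (dvd_pow_self 2 (by omega : k + 2 ≠ 0)) this
    omega
  obtain ⟨w, hw⟩ := hz3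
  have hwdvd : w ∣ 2 ^ k := by
    have : 3 * w ∣ 3 * 2 ^ k := by rw [← hw]; exact hzN
    exact (mul_dvd_mul_iff_left (by norm_num : (3:ℕ) ≠ 0)).mp this
  obtain ⟨j, hjk, hjw⟩ := (Nat.dvd_prime_pow Nat.prime_two).mp hwdvd
  by_cases hjeq : j = k
  · rw [hw, hjw, hjeq]; norm_num
  · exfalso
    have hjlt : j < k := by omega
    have : 2 ^ (k + 2) ∣ fib (3 * 2 ^ j) := by
      apply dvd_trans hzdvd
      apply fib_dvd
      rw [hw, hjw]
    exact key j hjlt this
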